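/- arXiv:1303.1994 — 2 statements merged into one kernel-verified Lean document; each statement's English description precedes it below -/
import Mathlib

section
/- Let B be a type and σ : ℕ → B an eventually periodic stream, i.e., there exist N and p > 0 such that σ(n + p) = σ(n) for all n ≥ N. Then there exist a finite type S, a stream coalgebra c : S → B × S and a state s ∈ S whose behaviour equals σ, where the behaviour map beh : S → (ℕ → B) is defined by beh(s)(0) = (c s).1 and beh(s)(n+1) = beh((c s).2)(n). -/
/-- The behaviour map of a stream coalgebra `c : S → B × S`. -/
def beh {S B : Type*} (c : S → B × S) : S → ℕ → B
  | s, 0 => (c s).1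
  | s, n + 1 => beh c (c s).2 n

/-- Every eventually periodic stream is the behaviour of a state of some
finite stream coalgebra. -/
theorem eventually_periodic_is_beh {B : Type*} (σ : ℕ → B) (N p : ℕ)
    (hp : 0 < p) (hper : ∀ n ≥ N, σ (n + p) = σ n) :
    ∃ (S : Type) (_ : Fintype S) (c : S → B × S) (s : S), beh c s = σ := by
  set M := N + p with hM
  have hM0 : 0 < M := by omega
  set valf : ℕ → ℕ := fun n => if n < M then n else N + (n - N) % p with hvalf
  have hlt : ∀ n, valf n < M := by
    intro n
    simp only [hvalf]
    split
    · omega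
    · have := Nat.mod_lt (n - N) hp
      omega
  have hval_ge : ∀ n, ¬ n < M → valf n = valf (n - p) := by
    intro n hn
    have h1 : n - N = (n - p - N) + p := by omega
    simp only [hvalf]
    rw [if_neg hn, h1, Nat.add_mod_right]
    split
    · rw [Nat.mod_eq_of_lt (by omega)]; omega
    · rfl
  have hσval : ∀ n, σ (valf n) = σ n := by
    intro n
    induction n using Nat.strong_induction_on with
    | _ n ih =>
      by_cases h : n < M
      · simp [hvalf, h]
      · have hn : n - p ≥ N := by omega
        have hpp := hper (n - p) hn
        rw [show n - p + p = n by omega] at hpp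
        rw [hval_ge n h, ih (n - p) (by omega), hpp]
  have hnext : ∀ n, (if valf n + 1 < M then valf n + 1 else N) = valf (n + 1) := by
    intro n
    by_cases h1 : n + 1 < M
    · have h0 : n < M := by omega
      simp [hvalf, h0, h1]
    · by_cases h2 : n < M
      · have hn1 : n + 1 = M := by omega
        simp only [hvalf]
        rw [if_pos h2, if_neg h1, if_neg (by omega)]
        have : n + 1 - N = p := by omega
        rw [this, Nat.mod_self]
        omega
      · have hv : valf n = N + (n - N) % p := by simp [hvalf, h2]
        have hv1 : valf (n + 1) = N + (n + 1 - N) % p := by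
          simp only [hvalf]; rw [if_neg (by omega)]
        have hmod : (n + 1 - N) = (n - N) + 1 := by omega
        rw [hv, hv1, hmod]
        by_cases h3 : (n - N) % p + 1 < p
        · have hp1 : 1 < p := by omega
          rw [if_pos (by omega)]
          rw [Nat.add_mod, Nat.mod_eq_of_lt hp1, Nat.mod_eq_of_lt h3]
          omega
        · have h4 : (n - N) % p = p - 1 := by
            have := Nat.mod_lt (n - N) hp
            omega
          rw [if_neg (by omega)]
          rw [Nat.add_mod, h4]
          have : (p - 1 + 1 % p) % p = 0 := by
            rcases Nat.lt_or_ge 1 p with h | h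
            · rw [Nat.mod_eq_of_lt h, show p - 1 + 1 = p by omega, Nat.mod_self]
            · have : p = 1 := by omega
              simp [this]
          rw [this]
          omega
  set c : Fin M → B × Fin M := fun i => (σ i.val,
      if h : i.val + 1 < M then ⟨i.val + 1, h⟩ else ⟨N, by omega⟩) with hc
  have key : ∀ k n, beh c ⟨valf n, hlt n⟩ k = σ (n + k) := by
    intro k
    induction k with
    | zero =>
      intro n
      show (c _).1 = σ (n + 0)
      simp [hc, hσval n]
    | succ k ih =>
      intro n
      show beh c (c ⟨valf n, hlt n⟩).2 k = σ (n + (k + 1))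
      have h2 : (c ⟨valf n, hlt n⟩).2 = ⟨valf (n + 1), hlt (n + 1)⟩ := by
        have hh := hnext n
        simp only [hc]
        split_ifs with h
        · exact Fin.ext (show valf n + 1 = valf (n + 1) by rw [← hh, if_pos h])
        · exact Fin.ext (show N = valf (n + 1) by rw [← hh, if_neg h])
      rw [h2, ih (n + 1)]
      congr 1
      omega
  exact ⟨Fin M, inferInstance, c, ⟨valf 0, hlt 0⟩, by
    funext k
    rw [key k 0, Nat.zero_add]⟩
end

section
/- Let α be a finite alphabet and M a deterministic finite automaton over α with a finite state type. Then there exists a regular expression P over α whose language equals the language accepted by M. -/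
namespace KleeneAux

variable {α σ : Type*}

/-- Run of `M` from `p` to `q` labeled `w`, all strictly intermediate states in `S`. -/
inductive Path (M : DFA α σ) (S : Set σ) : σ → List α → σ → Prop
  | nil (p) : Path M S p [] p
  | single (p a) : Path M S p [a] (M.step p a)
  | cons (p a) {w q} : M.step p a ∈ S → Path M S (M.step p a) w q → Path M S p (a :: w) q

def Lang (M : DFA α σ) (S : Set σ) (p q : σ) : Language α := {w | Path M S p w q}

theorem Path.mono {M : DFA α σ} {S T : Set σ} (h : S ⊆ T) {p w q}
    (hp : Path M S p w q) : Path M T p w q := by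
  induction hp with
  | nil p => exact .nil p
  | single p a => exact .single p a
  | cons p a hm _ ih => exact .cons p a (h hm) ih

theorem Path.append {M : DFA α σ} {S : Set σ} {p u r v q} (hr : r ∈ S)
    (h1 : Path M S p u r) (h2 : Path M S r v q) : Path M S p (u ++ v) q := by
  induction h1 with
  | nil p => exact h2
  | single p a => exact .cons p a hr h2
  | cons p a hm _ ih => exact .cons p a hm (ih hr h2)

theorem path_univ_of_eval {M : DFA α σ} (w : List α) (p : σ) :
    Path M Set.univ p w (M.evalFrom p w) := by
  induction w generalizing p with
  | nil => exact .nil p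
  | cons a w ih =>
    exact .cons p a (Set.mem_univ _) (by simpa [DFA.evalFrom] using ih (M.step p a))

theorem path_univ_iff {M : DFA α σ} {p w q} :
    Path M Set.univ p w q ↔ M.evalFrom p w = q := by
  constructor
  · intro h
    induction h with
    | nil p => rfl
    | single p a => rfl
    | cons p a _ _ ih => simpa [DFA.evalFrom] using ih
  · rintro rfl
    exact path_univ_of_eval w p

theorem path_insert_decomp {M : DFA α σ} {S : Set σ} {s p w q}
    (h : Path M (insert s S) p w q) :
    w ∈ Lang M S p q ∨
      w ∈ Lang M S p s * (KStar.kstar (Lang M S s s) * Lang M S s q) := by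
  induction h with
  | nil p => exact Or.inl (.nil p)
  | single p a => exact Or.inl (.single p a)
  | cons p a hm hpath ih =>
    rcases ih with h | h
    · rcases hm with rfl | hm
      · right
        refine Language.append_mem_mul (a := [a]) (.single p a) ?_
        exact Language.append_mem_mul (Language.nil_mem_kstar _) h
      · exact Or.inl (.cons p a hm h)
    · rcases Language.mem_mul.1 h with ⟨u, hu, v, hv, rfl⟩
      rcases hm with rfl | hm
      · right
        refine Language.append_mem_mul (a := [a]) (b := u ++ v) (.single p a) ?_
        rcases Language.mem_mul.1 hv with ⟨x, hx, y, hy, rfl⟩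
        rw [← List.append_assoc]
        refine Language.append_mem_mul ?_ hy
        rcases Language.mem_kstar.1 hx with ⟨L, rfl, hL⟩
        exact Language.mem_kstar.2 ⟨u :: L, rfl, List.forall_mem_cons.2 ⟨hu, hL⟩⟩
      · right
        exact Language.append_mem_mul (a := a :: u) (.cons p a hm hu) hv

theorem star_path {M : DFA α σ} {S : Set σ} {s q : σ} {x y : List α}
    (hx : x ∈ KStar.kstar (Lang M S s s)) (hy : Path M (insert s S) s y q) :
    Path M (insert s S) s (x ++ y) q := by
  rcases Language.mem_kstar.1 hx with ⟨L, rfl, hL⟩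
  clear hx
  induction L with
  | nil => simpa using hy
  | cons z L ih =>
    have hz : Path M (insert s S) s z s := (hL z (by simp)).mono (Set.subset_insert s S)
    have := hz.append (Set.mem_insert s S) (ih fun a ha => hL a (by simp [ha]))
    simpa using this

theorem lang_insert (M : DFA α σ) (S : Set σ) (s p q : σ) :
    Lang M (insert s S) p q =
      Lang M S p q + Lang M S p s * (KStar.kstar (Lang M S s s) * Lang M S s q) := by
  ext w
  rw [Language.mem_add]
  constructor
  · exact path_insert_decomp
  · rintro (h | h)
    · exact h.mono (Set.subset_insert s S)
    · rcases Language.mem_mul.1 h with ⟨u, hu, v, hv, rfl⟩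
      rcases Language.mem_mul.1 hv with ⟨x, hx, y, hy, rfl⟩
      have hxy : Path M (insert s S) s (x ++ y) q :=
        star_path hx (hy.mono (Set.subset_insert s S))
      exact (hu.mono (Set.subset_insert s S)).append (Set.mem_insert s S) hxy

/-- Sum of a list of regular expressions. -/
def rsum (l : List (RegularExpression α)) : RegularExpression α :=
  l.foldr (· + ·) 0

theorem mem_rsum {l : List (RegularExpression α)} {w : List α} :
    w ∈ (rsum l).matches' ↔ ∃ P ∈ l, w ∈ P.matches' := by
  induction l with
  | nil => simp [rsum, RegularExpression.matches'_zero, Language.notMem_zero]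
  | cons P l ih =>
    simp only [rsum, List.foldr_cons]
    rw [RegularExpression.matches'_add, Language.mem_add]
    simp only [List.mem_cons, rsum] at *
    constructor
    · rintro (h | h)
      · exact ⟨P, Or.inl rfl, h⟩
      · rcases ih.1 h with ⟨Q, hQ, hw⟩
        exact ⟨Q, Or.inr hQ, hw⟩
    · rintro ⟨Q, rfl | hQ, hw⟩
      · exact Or.inl hw
      · exact Or.inr (ih.2 ⟨Q, hQ, hw⟩)

theorem lang_regular [Fintype α] (M : DFA α σ) (S : Finset σ) (p q : σ) :
    ∃ P : RegularExpression α, P.matches' = Lang M ↑S p q := by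
  classical
  induction S using Finset.induction_on generalizing p q with
  | empty =>
    refine ⟨(if p = q then 1 else 0) +
      rsum (((Finset.univ.filter (fun a => M.step p a = q)).toList).map
        RegularExpression.char), ?_⟩
    ext w
    rw [RegularExpression.matches'_add, Language.mem_add, mem_rsum]
    constructor
    · rintro (h | ⟨P, hP, hw⟩)
      · split at h
        · subst ‹p = q›
          rw [RegularExpression.matches'_epsilon, Language.mem_one] at h
          subst h
          exact Path.nil p
        · rw [RegularExpression.matches'_zero] at h
          exact absurd h (Language.notMem_zero w)
      · rcases List.mem_map.1 hP with ⟨a, ha, rfl⟩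
        rw [RegularExpression.matches'_char] at hw; change w = [a] at hw
        subst hw
        have ha' := Finset.mem_filter.1 (Finset.mem_toList.1 ha)
        rw [← ha'.2]
        exact Path.single p a
    · intro h
      cases h with
      | nil => left; simp [RegularExpression.matches'_epsilon, Language.mem_one]
      | single p a =>
        right
        refine ⟨RegularExpression.char a, List.mem_map.2
          ⟨a, Finset.mem_toList.2 (Finset.mem_filter.2 ⟨Finset.mem_univ a, rfl⟩), rfl⟩, ?_⟩
        rw [RegularExpression.matches'_char]
        rfl
      | cons p a hm _ => simp at hm
  | insert _ _ hs ih =>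
    rename_i s S
    obtain ⟨Ppq, hPpq⟩ := ih p q
    obtain ⟨Pps, hPps⟩ := ih p s
    obtain ⟨Pss, hPss⟩ := ih s s
    obtain ⟨Psq, hPsq⟩ := ih s q
    refine ⟨Ppq + Pps * (Pss.star * Psq), ?_⟩
    rw [Finset.coe_insert, lang_insert]
    rw [RegularExpression.matches'_add, RegularExpression.matches'_mul,
      RegularExpression.matches'_mul, RegularExpression.matches'_star,
      hPpq, hPps, hPss, hPsq]

end KleeneAux

/-- Kleene's theorem, other direction: the language accepted by a DFA with
finitely many states over a finite alphabet is denoted by some regular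
expression. -/
theorem dfa_to_regex {α σ : Type*} [Fintype α] [Fintype σ] (M : DFA α σ) :
    ∃ P : RegularExpression α, P.matches' = M.accepts := by
  classical
  choose P hP using fun q => KleeneAux.lang_regular M Finset.univ M.start q
  refine ⟨KleeneAux.rsum (((Finset.univ.filter (· ∈ M.accept)).toList).map P), ?_⟩
  ext w
  rw [KleeneAux.mem_rsum, DFA.mem_accepts]
  constructor
  · rintro ⟨Q, hQ, hw⟩
    rcases List.mem_map.1 hQ with ⟨q, hq, rfl⟩
    rw [hP q, Finset.coe_univ] at hw
    have := KleeneAux.path_univ_iff.1 hw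
    rw [DFA.eval, this]
    exact (Finset.mem_filter.1 (Finset.mem_toList.1 hq)).2
  · intro h
    refine ⟨P (M.eval w), List.mem_map.2 ⟨M.eval w,
      Finset.mem_toList.2 (Finset.mem_filter.2 ⟨Finset.mem_univ _, h⟩), rfl⟩, ?_⟩
    rw [hP, Finset.coe_univ]
    exact KleeneAux.path_univ_iff.2 rfl
end
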